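/- Let n ≥ 2, p ≥ 2, and let A₁, …, A_p ∈ GL_n(ℂ) be such that for all i < j the matrix A_i·A_j⁻¹ is a pseudo-reflection. Then there exists P ∈ GL_n(ℂ) such that either the matrices P·A_i·P⁻¹ all have the same first n−1 columns, or they all have the same first n−1 rows. -/

import Mathlib

open Matrix

-- rank-1 decomposition
lemma aux_rank_one_decomp {n : ℕ} {M : Matrix (Fin n) (Fin n) ℂ} (h : M.rank = 1) :
    ∃ u v : Fin n → ℂ, u ≠ 0 ∧ v ≠ 0 ∧ M = vecMulVec u v := by
  have h' := h
  rw [Matrix.rank] at h'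
  obtain ⟨u, hu0, hspan⟩ := finrank_eq_one_iff'.mp h'
  have hcol : ∀ j, ∃ c : ℂ, c • (u : Fin n → ℂ) = M.mulVec (Pi.single j 1) := by
    intro j
    have hmem : M.mulVec (Pi.single j 1) ∈ LinearMap.range M.mulVecLin :=
      ⟨Pi.single j 1, rfl⟩
    obtain ⟨c, hc⟩ := hspan ⟨_, hmem⟩
    exact ⟨c, congrArg Subtype.val hc⟩
  choose v hv using hcol
  refine ⟨u, v, ?_, ?_, ?_⟩
  · intro h0
    exact hu0 (Subtype.ext h0)
  · intro h0
    apply one_ne_zero (α := ℕ)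
    rw [← h, Matrix.rank]
    have : M = 0 := by
      ext i j
      have := congrFun (hv j) i
      rw [Matrix.mulVec_single] at this
      simp only [Pi.smul_apply, MulOpposite.op_one, one_smul, Matrix.col_apply] at this
      have hvj : v j = 0 := congrFun h0 j
      rw [hvj] at this
      simpa using this.symm
    simp [this]
  · ext i j
    have := congrFun (hv j) i
    rw [Matrix.mulVec_single] at this
    simp only [Pi.smul_apply, MulOpposite.op_one, one_smul, Matrix.col_apply] at this
    rw [vecMulVec_apply, ← this]
    simp [Pi.smul_apply, smul_eq_mul, mul_comm]


-- surjectivity from independent rows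
lemma aux_dual {n : ℕ} {v w : Fin n → ℂ} (h : LinearIndependent ℂ ![v, w]) (c : Fin 2 → ℂ) :
    ∃ x : Fin n → ℂ, v ⬝ᵥ x = c 0 ∧ w ⬝ᵥ x = c 1 := by
  set V : Matrix (Fin 2) (Fin n) ℂ := of ![v, w] with hV
  have hrank : V.rank = 2 := by
    have := LinearIndependent.rank_matrix (M := V) h
    simpa using this
  have htop : LinearMap.range V.mulVecLin = ⊤ := by
    apply Submodule.eq_top_of_finrank_eq
    rw [← Matrix.rank, hrank]
    simp [Module.finrank_fin_fun]
  have hc : c ∈ LinearMap.range V.mulVecLin := htop ▸ Submodule.mem_top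
  obtain ⟨x, hx⟩ := hc
  refine ⟨x, ?_, ?_⟩
  · have := congrFun hx 0
    simpa [V, Matrix.mulVecLin, Matrix.mulVec, dotProduct] using this
  · have := congrFun hx 1
    simpa [V, Matrix.mulVecLin, Matrix.mulVec, dotProduct] using this

lemma aux_vecMulVec_mulVec {n : ℕ} (u v x : Fin n → ℂ) :
    (vecMulVec u v).mulVec x = (v ⬝ᵥ x) • u := by
  ext i
  simp [Matrix.mulVec, vecMulVec_apply, dotProduct, Finset.mul_sum, mul_assoc, mul_comm,
    mul_left_comm, smul_eq_mul]

-- if both pairs independent, rank ≥ 2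
lemma aux_rank_two {n : ℕ} {u₁ v₁ u₂ v₂ : Fin n → ℂ}
    (hu : LinearIndependent ℂ ![u₁, u₂]) (hv : LinearIndependent ℂ ![v₁, v₂]) :
    2 ≤ (vecMulVec u₁ v₁ - vecMulVec u₂ v₂).rank := by
  set M := vecMulVec u₁ v₁ - vecMulVec u₂ v₂ with hM
  obtain ⟨x, hx1, hx2⟩ := aux_dual hv ![1, 0]
  obtain ⟨y, hy1, hy2⟩ := aux_dual hv ![0, 1]
  have hmx : M.mulVec x = u₁ := by
    rw [hM, Matrix.sub_mulVec, aux_vecMulVec_mulVec, aux_vecMulVec_mulVec]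
    simp only [hx1, hx2]
    simp
  have hmy : M.mulVec y = -u₂ := by
    rw [hM, Matrix.sub_mulVec, aux_vecMulVec_mulVec, aux_vecMulVec_mulVec]
    simp only [hy1, hy2]
    simp
  have hsub : Submodule.span ℂ (Set.range ![u₁, u₂]) ≤ LinearMap.range M.mulVecLin := by
    rw [Submodule.span_le]
    rintro z ⟨i, rfl⟩
    fin_cases i
    · exact ⟨x, hmx⟩
    · refine ⟨-y, ?_⟩
      show M.mulVec (-y) = _
      rw [Matrix.mulVec_neg, hmy, neg_neg]
      simp
  have h2 : Module.finrank ℂ (Submodule.span ℂ (Set.range ![u₁, u₂])) = 2 := by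
    rw [finrank_span_eq_card hu]
    simp
  calc (2:ℕ) = Module.finrank ℂ (Submodule.span ℂ (Set.range ![u₁, u₂])) := h2.symm
    _ ≤ Module.finrank ℂ (LinearMap.range M.mulVecLin) := Submodule.finrank_mono hsub
    _ = M.rank := rfl


-- a basis of ℂⁿ whose value at a given index is a given nonzero vector
lemma aux_basis {n : ℕ} (hn : 1 ≤ n) (u : Fin n → ℂ) (hu : u ≠ 0) (l : Fin n) :
    ∃ b : Module.Basis (Fin n) ℂ (Fin n → ℂ), b l = u := by
  have hs : LinearIndepOn ℂ id ({u} : Set (Fin n → ℂ)) :=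
    LinearIndepOn.singleton hu
  let b0 := Module.Basis.extend hs
  haveI : Fintype (hs.extend (Set.subset_univ _)) := FiniteDimensional.fintypeBasisIndex b0
  have hcard : Fintype.card (hs.extend (Set.subset_univ _)) = n := by
    rw [← Module.finrank_eq_card_basis b0, Module.finrank_fin_fun]
  let g : (hs.extend (Set.subset_univ _)) ≃ Fin n := Fintype.equivFinOfCardEq hcard
  have humem : u ∈ hs.extend (Set.subset_univ _) := Module.Basis.subset_extend hs (by simp)
  let e : (hs.extend (Set.subset_univ _)) ≃ Fin n := g.trans (Equiv.swap (g ⟨u, humem⟩) l)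
  refine ⟨b0.reindex e, ?_⟩
  rw [Module.Basis.reindex_apply]
  have : e.symm l = ⟨u, humem⟩ := by
    apply e.injective
    simp only [Equiv.apply_symm_apply]
    simp [e, Equiv.swap_apply_left]
  rw [this]
  exact Module.Basis.extend_apply_self hs _

-- invertible matrix sending u to Pi.single l 1
lemma aux_exists_P {n : ℕ} (hn : 1 ≤ n) (u : Fin n → ℂ) (hu : u ≠ 0) (l : Fin n) :
    ∃ P : Matrix (Fin n) (Fin n) ℂ, IsUnit P ∧ P.mulVec u = Pi.single l 1 := by
  obtain ⟨b, hb⟩ := aux_basis hn u hu l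
  let s : Module.Basis (Fin n) ℂ (Fin n → ℂ) := Pi.basisFun ℂ (Fin n)
  let Q : Matrix (Fin n) (Fin n) ℂ := s.toMatrix b
  have hQu : IsUnit Q := by
    have h1 : Q * b.toMatrix s = 1 := Module.Basis.toMatrix_mul_toMatrix_flip s b
    exact ⟨⟨Q, b.toMatrix s, h1, mul_eq_one_comm.mp h1⟩, rfl⟩
  have hQ : Q.mulVec (Pi.single l 1) = u := by
    ext i
    have : Q.mulVec (Pi.single l 1) i = Q i l := by
      rw [Matrix.mulVec_single]; simp
    rw [this]
    show s.toMatrix b i l = u i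
    rw [Module.Basis.toMatrix_apply, hb]
    simp [s]
  refine ⟨Q⁻¹, ?_, ?_⟩
  · exact (Matrix.isUnit_nonsing_inv_iff).mpr hQu
  · rw [← hQ, Matrix.mulVec_mulVec, Matrix.nonsing_inv_mul _ ((Matrix.isUnit_iff_isUnit_det Q).mp hQu), Matrix.one_mulVec]

lemma aux_mul_vecMulVec {n : ℕ} (P Q : Matrix (Fin n) (Fin n) ℂ) (u w : Fin n → ℂ) :
    P * vecMulVec u w * Q = vecMulVec (P.mulVec u) (Matrix.vecMul w Q) := by
  rw [vecMulVec_eq (Fin 1), vecMulVec_eq (Fin 1), Matrix.replicateCol_mulVec, Matrix.replicateRow_vecMul,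
    Matrix.mul_assoc, Matrix.mul_assoc, Matrix.mul_assoc]

theorem aux_conj_row {n p : ℕ} (hn : 2 ≤ n) (A : Fin p → Matrix (Fin n) (Fin n) ℂ)
    (u : Fin n → ℂ) (hu : u ≠ 0)
    (h : ∀ i j : Fin p, ∃ w, A i - A j = vecMulVec u w) :
    ∃ P : Matrix (Fin n) (Fin n) ℂ, IsUnit P ∧
      ∀ i j : Fin p, ∀ k : Fin n, (k : ℕ) < n - 1 → ∀ r : Fin n,
        (P * A i * P⁻¹) k r = (P * A j * P⁻¹) k r := by
  have h1n : 1 ≤ n := by omega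
  set l : Fin n := ⟨n - 1, by omega⟩ with hl
  obtain ⟨P, hP, hPu⟩ := aux_exists_P h1n u hu l
  refine ⟨P, hP, ?_⟩
  intro i j k hk r
  obtain ⟨w, hw⟩ := h i j
  have key : P * A i * P⁻¹ - P * A j * P⁻¹ = vecMulVec (Pi.single l 1) (Matrix.vecMul w P⁻¹) := by
    have : P * A i * P⁻¹ - P * A j * P⁻¹ = P * (A i - A j) * P⁻¹ := by
      noncomm_ring
    rw [this, hw, aux_mul_vecMulVec, hPu]
  have hentry := congrFun (congrFun key k) r
  have hkl : k ≠ l := by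
    intro hkeq
    rw [hkeq] at hk
    simp [hl] at hk
  rw [Matrix.sub_apply, vecMulVec_apply] at hentry
  rw [Pi.single_eq_of_ne hkl, zero_mul] at hentry
  exact sub_eq_zero.mp hentry

lemma aux_vecMulVec_transpose {n : ℕ} (u w : Fin n → ℂ) :
    (vecMulVec u w)ᵀ = vecMulVec w u := by
  ext i j
  simp [vecMulVec_apply, mul_comm]

theorem aux_conj_col {n p : ℕ} (hn : 2 ≤ n) (A : Fin p → Matrix (Fin n) (Fin n) ℂ)
    (v : Fin n → ℂ) (hv : v ≠ 0)
    (h : ∀ i j : Fin p, ∃ w, A i - A j = vecMulVec w v) :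
    ∃ P : Matrix (Fin n) (Fin n) ℂ, IsUnit P ∧
      ∀ i j : Fin p, ∀ k : Fin n, (k : ℕ) < n - 1 → ∀ r : Fin n,
        (P * A i * P⁻¹) r k = (P * A j * P⁻¹) r k := by
  have h' : ∀ i j : Fin p, ∃ w, (fun i => (A i)ᵀ) i - (fun i => (A i)ᵀ) j = vecMulVec v w := by
    intro i j
    obtain ⟨w, hw⟩ := h i j
    exact ⟨w, by rw [← Matrix.transpose_sub, hw, aux_vecMulVec_transpose]⟩
  obtain ⟨Q, hQ, hQprop⟩ := aux_conj_row hn (fun i => (A i)ᵀ) v hv h'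
  have hQdet : IsUnit Q.det := (Matrix.isUnit_iff_isUnit_det Q).mp hQ
  refine ⟨(Q⁻¹)ᵀ, ?_, ?_⟩
  · rw [Matrix.transpose_nonsing_inv]
    exact (Matrix.isUnit_nonsing_inv_iff.mpr (by rwa [Matrix.isUnit_iff_isUnit_det, Matrix.det_transpose, ← Matrix.isUnit_iff_isUnit_det]))
  · intro i j k hk r
    have hPinv : ((Q⁻¹)ᵀ)⁻¹ = Qᵀ := by
      rw [Matrix.transpose_nonsing_inv]
      exact Matrix.nonsing_inv_nonsing_inv _ (by rwa [Matrix.det_transpose])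
    have key : ∀ m : Fin p, (Q⁻¹)ᵀ * A m * ((Q⁻¹)ᵀ)⁻¹ = (Q * (A m)ᵀ * Q⁻¹)ᵀ := by
      intro m
      rw [hPinv, Matrix.transpose_mul, Matrix.transpose_mul, Matrix.transpose_transpose,
        Matrix.mul_assoc]
    rw [key i, key j]
    exact hQprop i j k hk r

lemma aux_vecMulVec_smul {n : ℕ} (c : ℂ) (a b : Fin n → ℂ) :
    vecMulVec (c • a) b = vecMulVec a (c • b) := by
  ext i j; simp [vecMulVec_apply]; ring

lemma aux_vecMulVec_sub_left {n : ℕ} (a b v : Fin n → ℂ) :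
    vecMulVec a v - vecMulVec b v = vecMulVec (a - b) v := by
  ext i j; simp [vecMulVec_apply]; ring

lemma aux_vecMulVec_sub_right {n : ℕ} (u a b : Fin n → ℂ) :
    vecMulVec u a - vecMulVec u b = vecMulVec u (a - b) := by
  ext i j; simp [vecMulVec_apply]; ring

lemma aux_vecMulVec_zero_left {n : ℕ} (v : Fin n → ℂ) : vecMulVec (0 : Fin n → ℂ) v = 0 := by
  ext i j; simp [vecMulVec_apply]

lemma aux_vecMulVec_zero_right {n : ℕ} (v : Fin n → ℂ) : vecMulVec v (0 : Fin n → ℂ) = 0 := by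
  ext i j; simp [vecMulVec_apply]

lemma aux_not_indep {n : ℕ} {a b : Fin n → ℂ} (hb : b ≠ 0)
    (h : ¬ LinearIndependent ℂ ![a, b]) : ∃ c : ℂ, a = c • b := by
  rw [linearIndependent_fin2] at h
  push_neg at h
  simp only [Matrix.cons_val_one, Matrix.head_cons, Matrix.cons_val_zero] at h
  obtain ⟨c, hc⟩ := h hb
  exact ⟨c, hc.symm⟩

theorem stmt_2 (n p : ℕ) (hn : 2 ≤ n) (hp : 2 ≤ p) (A : Fin p → Matrix (Fin n) (Fin n) ℂ)
    (hA : ∀ i, IsUnit (A i))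
    (hpr : ∀ i j : Fin p, i < j → (A i * (A j)⁻¹ - 1).rank = 1) :
    ∃ P : Matrix (Fin n) (Fin n) ℂ, IsUnit P ∧
      ((∀ i j : Fin p, ∀ k : Fin n, (k : ℕ) < n - 1 → ∀ r : Fin n,
          (P * A i * P⁻¹) r k = (P * A j * P⁻¹) r k) ∨
       (∀ i j : Fin p, ∀ k : Fin n, (k : ℕ) < n - 1 → ∀ r : Fin n,
          (P * A i * P⁻¹) k r = (P * A j * P⁻¹) k r)) := by
  -- differences have rank one
  have hd' : ∀ i j : Fin p, i < j → (A i - A j).rank = 1 := by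
    intro i j hij
    have hdet : IsUnit (A j)⁻¹.det := by
      exact Matrix.isUnit_nonsing_inv_det _ ((Matrix.isUnit_iff_isUnit_det (A j)).mp (hA j))
    have : (A i - A j) * (A j)⁻¹ = A i * (A j)⁻¹ - 1 := by
      rw [Matrix.sub_mul, Matrix.mul_nonsing_inv _ ((Matrix.isUnit_iff_isUnit_det (A j)).mp (hA j))]
    rw [← Matrix.rank_mul_eq_left_of_isUnit_det (A j)⁻¹ (A i - A j) hdet, this]
    exact hpr i j hij
  have hneg : ∀ M : Matrix (Fin n) (Fin n) ℂ, (-M).rank = M.rank := by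
    intro M
    have hu : IsUnit (-1 : Matrix (Fin n) (Fin n) ℂ).det :=
      (Matrix.isUnit_iff_isUnit_det _).mp isUnit_one.neg
    have : -M = (-1 : Matrix (Fin n) (Fin n) ℂ) * M := by rw [neg_mul, one_mul]
    rw [this, Matrix.rank_mul_eq_right_of_isUnit_det _ _ hu]
  have hd : ∀ i j : Fin p, i ≠ j → (A i - A j).rank = 1 := by
    intro i j hij
    rcases lt_or_gt_of_ne hij with h | h
    · exact hd' i j h
    · rw [show A i - A j = -(A j - A i) from (neg_sub _ _).symm, hneg]
      exact hd' j i h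
  set i0 : Fin p := ⟨0, by omega⟩ with hi0
  set i1 : Fin p := ⟨1, by omega⟩ with hi1
  have hi10 : i1 ≠ i0 := by simp [hi0, hi1, Fin.ext_iff]
  -- decompose differences with base point
  have hdec : ∀ i : Fin p, ∃ u v : Fin n → ℂ,
      A i - A i0 = vecMulVec u v ∧ (i ≠ i0 → u ≠ 0 ∧ v ≠ 0) := by
    intro i
    by_cases hi : i = i0
    · exact ⟨0, 0, by rw [hi, sub_self, aux_vecMulVec_zero_left], fun h => absurd hi h⟩
    · obtain ⟨u, v, hu, hv, huv⟩ := aux_rank_one_decomp (hd i i0 hi)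
      exact ⟨u, v, huv, fun _ => ⟨hu, hv⟩⟩
  choose u v huv hne using hdec
  have hu1 : u i1 ≠ 0 := (hne i1 hi10).1
  have hv1 : v i1 ≠ 0 := (hne i1 hi10).2
  -- pairwise rank at most one
  have key : ∀ i j : Fin p, i ≠ j →
      ¬(LinearIndependent ℂ ![u i, u j] ∧ LinearIndependent ℂ ![v i, v j]) := by
    rintro i j hij ⟨hui, hvi⟩
    have h2 := aux_rank_two hui hvi
    have : vecMulVec (u i) (v i) - vecMulVec (u j) (v j) = A i - A j := by
      rw [← huv i, ← huv j]; abel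
    rw [this, hd i j hij] at h2
    omega
  by_cases hcase : ∀ i, i ≠ i0 → ∃ c : ℂ, v i = c • v i1
  · -- common right vector: column case
    have hDi : ∀ i, ∃ w, A i - A i0 = vecMulVec w (v i1) := by
      intro i
      by_cases hi : i = i0
      · exact ⟨0, by rw [hi, sub_self, aux_vecMulVec_zero_left]⟩
      · obtain ⟨c, hc⟩ := hcase i hi
        refine ⟨c • u i, ?_⟩
        rw [huv i, hc, ← aux_vecMulVec_smul]
    have hAij : ∀ i j : Fin p, ∃ w, A i - A j = vecMulVec w (v i1) := by
      intro i j
      obtain ⟨wi, hwi⟩ := hDi i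
      obtain ⟨wj, hwj⟩ := hDi j
      refine ⟨wi - wj, ?_⟩
      rw [← aux_vecMulVec_sub_left, ← hwi, ← hwj]; abel
    obtain ⟨P, hP, hprop⟩ := aux_conj_col hn A (v i1) hv1 hAij
    exact ⟨P, hP, Or.inl hprop⟩
  · -- common left vector: row case
    push_neg at hcase
    obtain ⟨i2, hi20, hi2⟩ := hcase
    have hu2 : u i2 ≠ 0 := (hne i2 hi20).1
    have hv2 : v i2 ≠ 0 := (hne i2 hi20).2
    have hi21 : i2 ≠ i1 := by
      intro h
      exact hi2 1 (by rw [h, one_smul])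
    have hvind : LinearIndependent ℂ ![v i2, v i1] := by
      rw [linearIndependent_fin2]
      simp only [Matrix.cons_val_one, Matrix.head_cons, Matrix.cons_val_zero]
      exact ⟨hv1, fun c hc => hi2 c hc.symm⟩
    have hu21 : ∃ c : ℂ, u i2 = c • u i1 := by
      apply aux_not_indep hu1
      intro hind
      exact key i2 i1 hi21 ⟨hind, hvind⟩
    obtain ⟨c2, hc2⟩ := hu21
    have hcu : ∀ i, i ≠ i0 → ∃ c : ℂ, u i = c • u i1 := by
      intro i hi
      by_cases h1 : i = i1
      · exact ⟨1, by rw [h1, one_smul]⟩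
      by_cases h2 : i = i2
      · exact ⟨c2, by rw [h2, hc2]⟩
      by_cases hvi1 : LinearIndependent ℂ ![v i, v i1]
      · apply aux_not_indep hu1
        intro hind
        exact key i i1 h1 ⟨hind, hvi1⟩
      · obtain ⟨d, hd1⟩ := aux_not_indep hv1 hvi1
        by_cases hvi2 : LinearIndependent ℂ ![v i, v i2]
        · obtain ⟨c', hc'⟩ : ∃ c' : ℂ, u i = c' • u i2 := by
            apply aux_not_indep hu2
            intro hind
            exact key i i2 h2 ⟨hind, hvi2⟩
          exact ⟨c' * c2, by rw [hc', hc2, smul_smul]⟩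
        · exfalso
          obtain ⟨d2, hd2⟩ := aux_not_indep hv2 hvi2
          have hvi0 : v i ≠ 0 := (hne i hi).2
          have hdne : d2 ≠ 0 := by
            intro h
            rw [h, zero_smul] at hd2
            exact hvi0 hd2
          exact hi2 (d2⁻¹ * d) (by rw [← smul_smul, ← hd1, hd2, smul_smul, inv_mul_cancel₀ hdne, one_smul])
    have hDi : ∀ i, ∃ w, A i - A i0 = vecMulVec (u i1) w := by
      intro i
      by_cases hi : i = i0
      · exact ⟨0, by rw [hi, sub_self, aux_vecMulVec_zero_right]⟩
      · obtain ⟨c, hc⟩ := hcu i hi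
        refine ⟨c • v i, ?_⟩
        rw [huv i, hc, aux_vecMulVec_smul]
    have hAij : ∀ i j : Fin p, ∃ w, A i - A j = vecMulVec (u i1) w := by
      intro i j
      obtain ⟨wi, hwi⟩ := hDi i
      obtain ⟨wj, hwj⟩ := hDi j
      refine ⟨wi - wj, ?_⟩
      rw [← aux_vecMulVec_sub_right, ← hwi, ← hwj]; abel
    obtain ⟨P, hP, hprop⟩ := aux_conj_row hn A (u i1) hu1 hAij
    exact ⟨P, hP, Or.inr hprop⟩
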